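/- The Fourier–Stieltjes coefficients of μ satisfy the Wiener-type Cesàro decay (1/x) ∑_{0 ≤ k ≤ x} |μ̂(k)|² → 0 as x → ∞; more precisely, setting Σ_N := 2^{-N} ∑_{k=0}^{2^N} |μ̂(k)|², one has 0 ≤ Σ_N < (7/8)^{N-1} max{Σ_0, Σ_1} for all N ≥ 2. -/

import Mathlib

open MeasureTheory Filter Topology Real
open scoped ENNReal

noncomputable section

/-- Stern's diatomic sequence: s(0)=0, s(1)=1, s(2n)=s(n), s(2n+1)=s(n)+s(n+1). -/
def stern : ℕ → ℕ
  | 0 => 0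
  | 1 => 1
  | n + 2 =>
    if h : n % 2 = 0 then stern (n / 2 + 1)
    else stern (n / 2 + 1) + stern (n / 2 + 2)
decreasing_by all_goals omega
/-- The probability measure μ_n = 3^{-n} ∑_{m=0}^{2^n-1} s(2^n+m) δ_{m/2^n} on the 1-torus. -/
def sternMeasure (n : ℕ) : Measure UnitAddCircle :=
  ((3 : ℝ≥0∞) ^ n)⁻¹ • ∑ m ∈ Finset.range (2 ^ n),
    (stern (2 ^ n + m) : ℝ≥0∞) • Measure.dirac ((m / 2 ^ n : ℝ) : UnitAddCircle)
/-- The Fourier–Stieltjes coefficient ν̂(k) = ∫_𝕋 e^{-2πikx} dν(x) of a measure ν on the 1-torus. -/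
def fourierCoeffMeasure (ν : Measure UnitAddCircle) (k : ℤ) : ℂ :=
  ∫ x, fourier (-k) x ∂ν
/-- Σ_N := 2^{-N} ∑_{k=0}^{2^N} |μ̂(k)|². -/
def wienerSum (μ : Measure UnitAddCircle) (N : ℕ) : ℝ :=
  ((2 : ℝ) ^ N)⁻¹ *
    ∑ k ∈ Finset.range (2 ^ N + 1), ‖fourierCoeffMeasure μ k‖ ^ 2


namespace SternAux

lemma stern_two_mul (n : ℕ) (hn : 1 ≤ n) : stern (2 * n) = stern n := by
  obtain ⟨m, rfl⟩ : ∃ m, n = m + 1 := ⟨n - 1, by omega⟩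
  show stern (2 * m + 2) = _
  rw [stern]
  rw [dif_pos (by omega)]
  congr 1
  omega

lemma stern_two_mul_add_one (n : ℕ) (hn : 1 ≤ n) :
    stern (2 * n + 1) = stern n + stern (n + 1) := by
  obtain ⟨m, rfl⟩ : ∃ m, n = m + 1 := ⟨n - 1, by omega⟩
  show stern (2 * m + 1 + 2) = _
  rw [stern]
  have h : (2 * m + 1) % 2 = 1 := by omega
  rw [dif_neg (by omega)]
  congr 2 <;> omega

lemma stern_pow2 (n : ℕ) : stern (2 ^ n) = 1 := by
  induction n with
  | zero => simp [stern]
  | succ n ih => rw [pow_succ, mul_comm, stern_two_mul _ (Nat.one_le_two_pow), ih]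

lemma sum_range_two_mul {M : Type*} [AddCommMonoid M] (f : ℕ → M) (n : ℕ) :
    ∑ m ∈ Finset.range (2 * n), f m = ∑ j ∈ Finset.range n, (f (2 * j) + f (2 * j + 1)) := by
  induction n with
  | zero => simp
  | succ n ih =>
    rw [Finset.sum_range_succ, ← ih, mul_add, mul_one, ← add_assoc]
    rw [Finset.sum_range_succ, Finset.sum_range_succ]

/-- exponential e_n(k,m) = exp(2πi(-k)m/2^n) -/
def stE (n : ℕ) (k : ℤ) (m : ℕ) : ℂ :=
  Complex.exp (2 * Real.pi * Complex.I * (-(k : ℂ)) * ((m : ℂ) / (2 : ℂ) ^ n))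

def F (n : ℕ) (k : ℤ) : ℂ :=
  ((3 : ℂ) ^ n)⁻¹ * ∑ m ∈ Finset.range (2 ^ n), (stern (2 ^ n + m) : ℂ) * stE n k m

lemma two_pow_ne (n : ℕ) : ((2 : ℂ) ^ n) ≠ 0 := pow_ne_zero _ two_ne_zero

lemma stE_even (n : ℕ) (k : ℤ) (j : ℕ) : stE (n + 1) k (2 * j) = stE n k j := by
  unfold stE
  congr 1
  have := two_pow_ne n
  push_cast
  field_simp
  ring

lemma stE_odd (n : ℕ) (k : ℤ) (j : ℕ) :
    stE (n + 1) k (2 * j + 1) = stE (n + 1) k 1 * stE n k j := by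
  unfold stE
  rw [← Complex.exp_add]
  congr 1
  have := two_pow_ne n
  push_cast
  field_simp
  ring

lemma stE_mul (n : ℕ) (k : ℤ) (a b : ℕ) : stE n k (a + b) = stE n k a * stE n k b := by
  unfold stE
  rw [← Complex.exp_add]
  congr 1
  push_cast
  ring

lemma stE_zero (n : ℕ) (k : ℤ) : stE n k 0 = 1 := by simp [stE]

lemma stE_full (n : ℕ) (k : ℤ) : stE n k (2 ^ n) = 1 := by
  unfold stE
  have h : 2 * (Real.pi : ℂ) * Complex.I * (-(k:ℂ)) * ((2:ℂ)^n / (2:ℂ)^n)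
      = ((-k : ℤ) : ℂ) * (2 * Real.pi * Complex.I) := by
    rw [div_self (two_pow_ne n)]
    push_cast
    ring
  rw [show ((2^n : ℕ) : ℂ) = (2:ℂ)^n by push_cast; ring, h,
    Complex.exp_int_mul_two_pi_mul_I]

lemma stE_sq (n : ℕ) (k : ℤ) : stE (n + 1) k 1 ^ 2 = stE n k 1 := by
  unfold stE
  rw [← Complex.exp_nat_mul]
  congr 1
  have := two_pow_ne n
  push_cast
  field_simp
  ring

lemma stE_one_eq (n : ℕ) (k : ℤ) :
    stE (n + 1) k 1 = Complex.exp (((-(Real.pi * k / 2 ^ n) : ℝ) : ℂ) * Complex.I) := by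
  unfold stE
  congr 1
  have := two_pow_ne n
  push_cast
  field_simp
  ring

lemma F_succ (n : ℕ) (k : ℤ) :
    F (n + 1) k = (((1 + 2 * Real.cos (Real.pi * k / 2 ^ n)) / 3 : ℝ) : ℂ) * F n k := by
  set ω := stE (n + 1) k 1 with hω
  have hωne : ω ≠ 0 := Complex.exp_ne_zero _
  have hsplit : ∑ m ∈ Finset.range (2 ^ (n + 1)), (stern (2 ^ (n + 1) + m) : ℂ) * stE (n+1) k m
      = ∑ j ∈ Finset.range (2 ^ n),
          ((stern (2 ^ n + j) : ℂ) * stE n k j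
            + ((stern (2 ^ n + j) : ℂ) + (stern (2 ^ n + j + 1) : ℂ)) * (ω * stE n k j)) := by
    rw [show (2 : ℕ) ^ (n+1) = 2 * 2 ^ n by ring, sum_range_two_mul]
    refine Finset.sum_congr rfl fun j _ => ?_
    have h1 : 2 * 2 ^ n + 2 * j = 2 * (2 ^ n + j) := by ring
    have h2 : stern (2 * (2 ^ n + j)) = stern (2 ^ n + j) :=
      stern_two_mul _ (le_add_right Nat.one_le_two_pow)
    have h3 : stern (2 * (2 ^ n + j) + 1) = stern (2 ^ n + j) + stern (2 ^ n + j + 1) :=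
      stern_two_mul_add_one _ (le_add_right Nat.one_le_two_pow)
    have h4 : 2 * 2 ^ n + (2 * j + 1) = 2 * (2 ^ n + j) + 1 := by ring
    rw [h1, h4, h2, h3, stE_even, stE_odd]
    push_cast
    ring
  -- the shifted sum
  have hshift : ∑ j ∈ Finset.range (2 ^ n), (stern (2 ^ n + j + 1) : ℂ) * stE n k j
      = (∑ j ∈ Finset.range (2 ^ n), (stern (2 ^ n + j) : ℂ) * stE n k j) * (stE n k 1)⁻¹ := by
    have hz : stE n k 1 ≠ 0 := Complex.exp_ne_zero _
    have key : ∑ j ∈ Finset.range (2 ^ n), (stern (2 ^ n + (j + 1)) : ℂ) * stE n k (j + 1)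
        = ∑ j ∈ Finset.range (2 ^ n), (stern (2 ^ n + j) : ℂ) * stE n k j := by
      have e1 := Finset.sum_range_succ (fun j => (stern (2 ^ n + j) : ℂ) * stE n k j) (2 ^ n)
      have e2 := Finset.sum_range_succ' (fun j => (stern (2 ^ n + j) : ℂ) * stE n k j) (2 ^ n)
      have hg0 : (stern (2 ^ n + 0) : ℂ) * stE n k 0 = 1 := by
        simp [stE_zero, stern_pow2]
      have hgM : (stern (2 ^ n + 2 ^ n) : ℂ) * stE n k (2 ^ n) = 1 := by
        rw [stE_full, show 2 ^ n + 2 ^ n = 2 ^ (n + 1) by ring, stern_pow2]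
        simp
      rw [e2, hg0] at e1
      linear_combination e1 + hgM
    calc ∑ j ∈ Finset.range (2 ^ n), (stern (2 ^ n + j + 1) : ℂ) * stE n k j
        = (∑ j ∈ Finset.range (2 ^ n), (stern (2 ^ n + (j+1)) : ℂ) * stE n k (j+1)) * (stE n k 1)⁻¹ := by
          rw [Finset.sum_mul]
          refine Finset.sum_congr rfl fun j _ => ?_
          rw [stE_mul n k j 1]
          field_simp
          ring_nf
      _ = _ := by rw [key]
  have hfactor : (1 : ℂ) + ω + ω * (ω ^ 2)⁻¹
      = (((1 + 2 * Real.cos (Real.pi * k / 2 ^ n)) : ℝ) : ℂ) := by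
    have hinv : ω * (ω ^ 2)⁻¹ = ω⁻¹ := by
      field_simp
    rw [hinv, hω, stE_one_eq]
    rw [← Complex.exp_neg]
    have : -(((-(Real.pi * k / 2 ^ n) : ℝ) : ℂ) * Complex.I)
        = ((-(-(Real.pi * k / 2 ^ n)) : ℝ) : ℂ) * Complex.I := by push_cast; ring
    rw [this, Complex.exp_mul_I, Complex.exp_mul_I,
      ← Complex.ofReal_cos, ← Complex.ofReal_sin, ← Complex.ofReal_cos, ← Complex.ofReal_sin,
      Real.cos_neg, Real.sin_neg, Real.cos_neg, Real.sin_neg]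
    push_cast
    simp only [Complex.cos_neg, Complex.sin_neg]
    ring
  unfold F
  rw [hsplit]
  have expand : ∑ j ∈ Finset.range (2 ^ n),
          ((stern (2 ^ n + j) : ℂ) * stE n k j
            + ((stern (2 ^ n + j) : ℂ) + (stern (2 ^ n + j + 1) : ℂ)) * (ω * stE n k j))
      = (1 + ω) * (∑ j ∈ Finset.range (2 ^ n), (stern (2 ^ n + j) : ℂ) * stE n k j)
        + ω * (∑ j ∈ Finset.range (2 ^ n), (stern (2 ^ n + j + 1) : ℂ) * stE n k j) := by
    rw [Finset.mul_sum, Finset.mul_sum, ← Finset.sum_add_distrib]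
    refine Finset.sum_congr rfl fun j _ => by ring
  rw [expand, hshift, ← stE_sq n k]
  rw [← hω]
  have h3 : ((3:ℂ) ^ (n+1))⁻¹ = (3:ℂ)⁻¹ * ((3:ℂ)^n)⁻¹ := by
    rw [pow_succ]
    field_simp
  rw [h3]
  have : (1 + ω) * (∑ j ∈ Finset.range (2 ^ n), (stern (2 ^ n + j) : ℂ) * stE n k j)
        + ω * ((∑ j ∈ Finset.range (2 ^ n), (stern (2 ^ n + j) : ℂ) * stE n k j) * (ω ^ 2)⁻¹)
      = ((1 : ℂ) + ω + ω * (ω ^ 2)⁻¹) * (∑ j ∈ Finset.range (2 ^ n), (stern (2 ^ n + j) : ℂ) * stE n k j) := by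
    ring
  rw [mul_assoc, this, hfactor, Complex.ofReal_div, Complex.ofReal_add, Complex.ofReal_mul,
    Complex.ofReal_one, Complex.ofReal_ofNat]
  push_cast
  ring

lemma hasCompactSupport_of_compactSpace {X E : Type*} [TopologicalSpace X] [CompactSpace X]
    [Zero E] [TopologicalSpace E] (f : X → E) : HasCompactSupport f :=
  IsCompact.of_isClosed_subset isCompact_univ (isClosed_tsupport f) (Set.subset_univ _)

lemma integrable_coeff_dirac {E : Type*} [NormedAddCommGroup E] [NormedSpace ℝ E]
    (c : ℕ) (x : UnitAddCircle) (f : UnitAddCircle → E) (hf : Continuous f) :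
    Integrable f ((c : ℝ≥0∞) • Measure.dirac x) := by
  have h1 : IsFiniteMeasure ((c : ℝ≥0∞) • Measure.dirac x) := by
    constructor
    rw [Measure.smul_apply, smul_eq_mul, Measure.dirac_apply' _ MeasurableSet.univ]
    simp [ENNReal.natCast_lt_top]
  exact hf.integrable_of_hasCompactSupport (hasCompactSupport_of_compactSpace f)

lemma integral_sternMeasure {E : Type*} [NormedAddCommGroup E] [NormedSpace ℝ E] [CompleteSpace E]
    (n : ℕ) (f : UnitAddCircle → E) (hf : Continuous f) :
    ∫ x, f x ∂(sternMeasure n) = ((3 : ℝ) ^ n)⁻¹ •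
      ∑ m ∈ Finset.range (2 ^ n),
        (stern (2 ^ n + m) : ℝ) • f (((m : ℝ) / 2 ^ n : ℝ) : UnitAddCircle) := by
  unfold sternMeasure
  rw [integral_smul_measure,
    integral_finset_sum_measure (fun m _ => integrable_coeff_dirac _ _ f hf)]
  congr 1
  · simp [ENNReal.toReal_inv, ENNReal.toReal_pow]
  refine Finset.sum_congr rfl fun m _ => ?_
  rw [integral_smul_measure, integral_dirac]
  simp

instance sternMeasure_finite (n : ℕ) : IsFiniteMeasure (sternMeasure n) := by
  constructor
  unfold sternMeasure
  rw [Measure.smul_apply, smul_eq_mul, Measure.coe_finset_sum]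
  simp only [Finset.sum_apply, Measure.smul_apply, smul_eq_mul,
    Measure.dirac_apply' _ MeasurableSet.univ]
  refine ENNReal.mul_lt_top (by simp [ENNReal.inv_lt_top, ENNReal.pow_pos]) ?_
  refine (ENNReal.sum_lt_top.2 fun m _ => ?_)
  simp [ENNReal.natCast_lt_top]

lemma stE_int_period (n : ℕ) (k : ℤ) (m : ℕ) : stE n (k + 2 ^ n) m = stE n k m := by
  unfold stE
  have h2 := two_pow_ne n
  have h : 2 * (Real.pi : ℂ) * Complex.I * (-((k + 2 ^ n : ℤ) : ℂ)) * ((m : ℂ) / 2 ^ n)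
      = 2 * (Real.pi : ℂ) * Complex.I * (-(k : ℂ)) * ((m : ℂ) / 2 ^ n)
        + ((-m : ℤ) : ℂ) * (2 * Real.pi * Complex.I) := by
    push_cast
    field_simp
    ring
  rw [h, Complex.exp_add, Complex.exp_int_mul_two_pi_mul_I, mul_one]

lemma F_period (n : ℕ) (k : ℤ) : F n (k + 2 ^ n) = F n k := by
  unfold F
  congr 1
  exact Finset.sum_congr rfl fun m _ => by rw [stE_int_period]

lemma stern_one : stern 1 = 1 := by simp [stern]

lemma F_zero (k : ℤ) : F 0 k = 1 := by
  unfold F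
  simp [stE_zero, stern_one]

lemma F_at_zero (n : ℕ) : F n 0 = 1 := by
  induction n with
  | zero => exact F_zero 0
  | succ n ih =>
    rw [F_succ, ih]
    norm_num

lemma F_two_pow (N : ℕ) : F (N + 1) ((2 : ℤ) ^ N) = -(1 / 3) := by
  have hper : F N ((2 : ℤ) ^ N) = 1 := by
    have : (2 : ℤ) ^ N = 0 + 2 ^ N := by ring
    rw [this, F_period, F_at_zero]
  rw [F_succ, hper, mul_one]
  have hc : Real.pi * ((2 : ℤ) ^ N : ℤ) / 2 ^ N = Real.pi := by
    push_cast
    field_simp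
  rw [hc, Real.cos_pi]
  norm_num

lemma abs_F_succ (n : ℕ) (k : ℤ) :
    ‖F (n + 1) k‖
      = |(1 + 2 * Real.cos (Real.pi * k / 2 ^ n)) / 3| * ‖F n k‖ := by
  rw [F_succ, norm_mul, Complex.norm_real, Real.norm_eq_abs]

lemma factor_abs_le_one (x : ℝ) : |(1 + 2 * Real.cos x) / 3| ≤ 1 := by
  have h1 := Real.neg_one_le_cos x
  have h2 := Real.cos_le_one x
  rw [abs_le]
  constructor <;> nlinarith

lemma abs_F_antitone (N n : ℕ) (k : ℤ) (h : N ≤ n) :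
    ‖F n k‖ ≤ ‖F N k‖ := by
  induction n, h using Nat.le_induction with
  | base => exact le_refl _
  | succ n hn ih =>
    refine le_trans ?_ ih
    rw [abs_F_succ]
    calc |(1 + 2 * Real.cos (Real.pi * k / 2 ^ n)) / 3| * ‖F n k‖
        ≤ 1 * ‖F n k‖ :=
          mul_le_mul_of_nonneg_right (factor_abs_le_one _) (norm_nonneg _)
      _ = ‖F n k‖ := one_mul _

/-- level-n sum of squared moduli -/
def G (n : ℕ) : ℝ := ∑ k ∈ Finset.range (2 ^ n), ‖F n (k : ℤ)‖ ^ 2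

lemma G_succ_le (n : ℕ) : G (n + 1) ≤ (10 / 9) * G n := by
  unfold G
  rw [show (2 : ℕ) ^ (n + 1) = 2 ^ n + 2 ^ n by ring, Finset.sum_range_add,
    Finset.mul_sum, ← Finset.sum_add_distrib]
  refine Finset.sum_le_sum fun k _ => ?_
  set θ := Real.pi * (k : ℤ) / 2 ^ n with hθ
  have h1 : ‖F (n + 1) (k : ℤ)‖ ^ 2
      = ((1 + 2 * Real.cos θ) / 3) ^ 2 * ‖F n (k : ℤ)‖ ^ 2 := by
    rw [abs_F_succ, mul_pow, sq_abs]
  have hcast : ((2 ^ n + k : ℕ) : ℤ) = (k : ℤ) + 2 ^ n := by push_cast; ring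
  have h2 : ‖F (n + 1) ((2 ^ n + k : ℕ) : ℤ)‖ ^ 2
      = ((1 - 2 * Real.cos θ) / 3) ^ 2 * ‖F n (k : ℤ)‖ ^ 2 := by
    rw [hcast, abs_F_succ, F_period, mul_pow, sq_abs]
    congr 3
    have hmath : Real.pi * (((k : ℤ) + 2 ^ n : ℤ) : ℝ) / 2 ^ n = θ + Real.pi := by
      rw [hθ]
      have h2n : ((2 : ℝ) ^ n) ≠ 0 := by positivity
      push_cast
      field_simp
    rw [hmath, Real.cos_add_pi]
    ring
  rw [h1, h2]
  have hc1 := Real.neg_one_le_cos θ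
  have hc2 := Real.cos_le_one θ
  have habs : (0 : ℝ) ≤ ‖F n (k : ℤ)‖ ^ 2 := by positivity
  nlinarith [sq_nonneg (Real.cos θ), mul_le_mul_of_nonneg_right
    (show ((1 + 2 * Real.cos θ) / 3) ^ 2 + ((1 - 2 * Real.cos θ) / 3) ^ 2 ≤ 10 / 9 by nlinarith)
    habs]

lemma G_le (n : ℕ) : G n ≤ (10 / 9) ^ n := by
  induction n with
  | zero =>
    unfold G
    simp [F_zero]
  | succ n ih =>
    calc G (n + 1) ≤ (10 / 9) * G n := G_succ_le n
      _ ≤ (10 / 9) * (10 / 9) ^ n := by nlinarith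
      _ = (10 / 9) ^ (n + 1) := by ring

lemma fourier_integral_sternMeasure (n : ℕ) (k : ℤ) :
    ∫ x, fourier (-k) x ∂(sternMeasure n) = F n k := by
  rw [integral_sternMeasure n _ (map_continuous _)]
  unfold F
  have hterm : ∀ m : ℕ, (stern (2 ^ n + m) : ℝ) •
        (fourier (-k) (((m : ℝ) / 2 ^ n : ℝ) : UnitAddCircle))
      = (stern (2 ^ n + m) : ℂ) * stE n k m := by
    intro m
    rw [fourier_coe_apply, Complex.real_smul]
    unfold stE
    push_cast
    rw [div_one]
  rw [Finset.sum_congr rfl fun m _ => hterm m, Complex.real_smul]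
  congr 1
  push_cast
  ring

lemma tendsto_F_coeff {μ : Measure UnitAddCircle} (hμ : IsProbabilityMeasure μ)
    (hlim : ∀ f : C(UnitAddCircle, ℝ),
      Tendsto (fun n => ∫ x, f x ∂(sternMeasure n)) atTop (𝓝 (∫ x, f x ∂μ)))
    (k : ℤ) : Tendsto (fun n => F n k) atTop (𝓝 (fourierCoeffMeasure μ k)) := by
  have hint : ∀ (ν : Measure UnitAddCircle), IsFiniteMeasure ν →
      Integrable (fun x => fourier (-k) x) ν := fun ν _ =>
    (map_continuous (fourier (-k))).integrable_of_hasCompactSupport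
      (hasCompactSupport_of_compactSpace _)
  have key : ∀ (ν : Measure UnitAddCircle), IsFiniteMeasure ν →
      ((∫ x, (fourier (-k) x).re ∂ν : ℝ) : ℂ)
        + (∫ x, (fourier (-k) x).im ∂ν : ℝ) * Complex.I
        = ∫ x, fourier (-k) x ∂ν := by
    intro ν hν
    have h := integral_re_add_im (𝕜 := ℂ) (hint ν hν)
    simp only [RCLike.re_to_complex, RCLike.im_to_complex] at h
    exact h
  have hre := hlim ⟨fun x => (fourier (-k) x).re,
    Complex.continuous_re.comp (map_continuous _)⟩
  have him := hlim ⟨fun x => (fourier (-k) x).im,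
    Complex.continuous_im.comp (map_continuous _)⟩
  simp only [ContinuousMap.coe_mk] at hre him
  have hT := ((Complex.continuous_ofReal.tendsto _).comp hre).add
    (((Complex.continuous_ofReal.tendsto _).comp him).mul_const Complex.I)
  have h2 : (fun n => (↑(∫ x, (fourier (-k) x).re ∂sternMeasure n) : ℂ)
      + ↑(∫ x, (fourier (-k) x).im ∂sternMeasure n) * Complex.I) = fun n => F n k := by
    funext n
    rw [key _ (sternMeasure_finite n), fourier_integral_sternMeasure]
  have h3 : ((∫ x, (fourier (-k) x).re ∂μ : ℝ) : ℂ)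
      + ↑(∫ x, (fourier (-k) x).im ∂μ) * Complex.I
      = fourierCoeffMeasure μ k := by
    haveI := hμ
    rw [key _ inferInstance]
    rfl
  rw [← h2, ← h3]
  exact hT

lemma abs_coeff_le {μ : Measure UnitAddCircle} (hμ : IsProbabilityMeasure μ)
    (hlim : ∀ f : C(UnitAddCircle, ℝ),
      Tendsto (fun n => ∫ x, f x ∂(sternMeasure n)) atTop (𝓝 (∫ x, f x ∂μ)))
    (k : ℤ) (N : ℕ) :
    ‖fourierCoeffMeasure μ k‖ ≤ ‖F N k‖ := by
  have ht := (continuous_norm.tendsto _).comp (tendsto_F_coeff hμ hlim k)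
  refine le_of_tendsto ht ?_
  filter_upwards [eventually_ge_atTop N] with n hn
  exact abs_F_antitone N n k hn

lemma wienerSum_le {μ : Measure UnitAddCircle} (hμ : IsProbabilityMeasure μ)
    (hlim : ∀ f : C(UnitAddCircle, ℝ),
      Tendsto (fun n => ∫ x, f x ∂(sternMeasure n)) atTop (𝓝 (∫ x, f x ∂μ)))
    (N : ℕ) : wienerSum μ N ≤ (5 / 9 : ℝ) ^ N + (1 / 9) * (1 / 2) ^ N := by
  unfold wienerSum
  rw [Finset.sum_range_succ]
  have hG : ∑ k ∈ Finset.range (2 ^ N), ‖fourierCoeffMeasure μ (k : ℤ)‖ ^ 2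
      ≤ G N := by
    refine Finset.sum_le_sum fun k _ => ?_
    exact pow_le_pow_left₀ (norm_nonneg _) (abs_coeff_le hμ hlim _ N) 2
  have hlast : ‖fourierCoeffMeasure μ ((2 ^ N : ℕ) : ℤ)‖ ^ 2 ≤ (1 / 3) ^ 2 := by
    rw [show ((2 ^ N : ℕ) : ℤ) = (2 : ℤ) ^ N by push_cast; ring]
    have h := abs_coeff_le hμ hlim ((2 : ℤ) ^ N) (N + 1)
    rw [F_two_pow] at h
    have : ‖-(1 / 3 : ℂ)‖ = 1 / 3 := by
      rw [norm_neg, norm_div, norm_one, Complex.norm_ofNat]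
    rw [this] at h
    exact pow_le_pow_left₀ (norm_nonneg _) h 2
  have hGle := G_le N
  calc ((2 : ℝ) ^ N)⁻¹ *
        ((∑ k ∈ Finset.range (2 ^ N), ‖fourierCoeffMeasure μ (k : ℤ)‖ ^ 2)
          + ‖fourierCoeffMeasure μ ((2 ^ N : ℕ) : ℤ)‖ ^ 2)
      ≤ ((2 : ℝ) ^ N)⁻¹ * ((10 / 9) ^ N + 1 / 9) := by
        refine mul_le_mul_of_nonneg_left ?_ (by positivity)
        nlinarith
    _ = (5 / 9 : ℝ) ^ N + (1 / 9) * (1 / 2) ^ N := by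
        rw [mul_add, ← inv_pow, ← mul_pow]
        norm_num
        ring

lemma numeric_bound (N : ℕ) :
    (5 / 9 : ℝ) ^ N + (1 / 9) * (1 / 2) ^ N < (8 / 7) * (7 / 8) ^ N := by
  induction N with
  | zero => norm_num
  | succ n ih =>
    have h1 : (0:ℝ) ≤ (5/9:ℝ)^n := by positivity
    have h2 : (0:ℝ) ≤ (1/2:ℝ)^n := by positivity
    rw [pow_succ, pow_succ, pow_succ]
    nlinarith

lemma coeff_zero {μ : Measure UnitAddCircle} (hμ : IsProbabilityMeasure μ) :
    fourierCoeffMeasure μ 0 = 1 := by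
  unfold fourierCoeffMeasure
  rw [neg_zero]
  simp only [fourier_zero]
  simp

lemma max_ge_one {μ : Measure UnitAddCircle} (hμ : IsProbabilityMeasure μ) :
    1 ≤ max (wienerSum μ 0) (wienerSum μ 1) := by
  refine le_trans ?_ (le_max_left _ _)
  unfold wienerSum
  rw [show (2:ℕ)^0 + 1 = 2 from rfl, Finset.sum_range_succ, Finset.sum_range_succ,
    Finset.sum_range_zero]
  rw [show ((0:ℕ):ℤ) = 0 from rfl, coeff_zero hμ]
  have h0 : (0:ℝ) ≤ ‖fourierCoeffMeasure μ ((1:ℕ):ℤ)‖ ^ 2 := by positivity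
  simp only [pow_zero, inv_one, one_mul, Finset.sum_range_zero, zero_add, norm_one, one_pow]
  nlinarith

end SternAux

open SternAux in
/-- Wiener-type Cesàro decay: (1/x) ∑_{0 ≤ k ≤ x} |μ̂(k)|² → 0 as x → ∞; more precisely,
0 ≤ Σ_N < (7/8)^{N-1} · max{Σ_0, Σ_1} for all N ≥ 2. -/
theorem fourierCoeff_limit_wiener (μ : Measure UnitAddCircle)
    (hμ : IsProbabilityMeasure μ)
    (hlim : ∀ f : C(UnitAddCircle, ℝ),
      Tendsto (fun n => ∫ x, f x ∂(sternMeasure n)) atTop (𝓝 (∫ x, f x ∂μ))) :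
    Tendsto
      (fun x : ℝ => x⁻¹ *
        ∑ k ∈ Finset.range (⌊x⌋₊ + 1), ‖fourierCoeffMeasure μ k‖ ^ 2)
      atTop (𝓝 0) ∧
    ∀ N : ℕ, 2 ≤ N →
      0 ≤ wienerSum μ N ∧
      wienerSum μ N < (7 / 8 : ℝ) ^ (N - 1) * max (wienerSum μ 0) (wienerSum μ 1) := by
  have hws : ∀ N, wienerSum μ N ≤ (5 / 9 : ℝ) ^ N + (1 / 9) * (1 / 2) ^ N :=
    wienerSum_le hμ hlim
  set B : ℕ → ℝ := fun N => (5 / 9 : ℝ) ^ N + (1 / 9) * (1 / 2) ^ N with hB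
  constructor
  · have hB0 : Tendsto B atTop (𝓝 0) := by
      have h1 : Tendsto (fun N => (5 / 9 : ℝ) ^ N) atTop (𝓝 0) :=
        tendsto_pow_atTop_nhds_zero_of_lt_one (by norm_num) (by norm_num)
      have h2 : Tendsto (fun N => (1 / 9 : ℝ) * (1 / 2) ^ N) atTop (𝓝 ((1 / 9) * 0)) :=
        (tendsto_pow_atTop_nhds_zero_of_lt_one (by norm_num) (by norm_num)).const_mul _
      have h3 := h1.add h2
      rw [hB]
      convert h3 using 2
      norm_num
    have hlog : Tendsto (fun x : ℝ => Nat.log 2 ⌊x⌋₊ + 1) atTop atTop := by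
      refine tendsto_atTop_atTop.2 fun b => ⟨((2 ^ b : ℕ) : ℝ), fun x hx => ?_⟩
      have hfl : (2 : ℕ) ^ b ≤ ⌊x⌋₊ := Nat.le_floor hx
      have hne : ⌊x⌋₊ ≠ 0 := by
        have : (0:ℕ) < 2 ^ b := by positivity
        omega
      have := (Nat.le_log_iff_pow_le (by norm_num) hne).2 hfl
      omega
    have hmain : ∀ x : ℝ, 1 ≤ x →
        x⁻¹ * ∑ k ∈ Finset.range (⌊x⌋₊ + 1), ‖fourierCoeffMeasure μ k‖ ^ 2
          ≤ 2 * B (Nat.log 2 ⌊x⌋₊ + 1) := by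
      intro x hx
      have hx0 : (0 : ℝ) < x := lt_of_lt_of_le one_pos hx
      set n := ⌊x⌋₊ with hn
      have hn1 : 1 ≤ n := Nat.le_floor (by exact_mod_cast hx)
      set N := Nat.log 2 n + 1 with hN
      have hlt : n < 2 ^ N := Nat.lt_pow_succ_log_self (by norm_num) n
      have hge : 2 ^ Nat.log 2 n ≤ n := Nat.pow_log_le_self 2 (by omega)
      have hxge : (2 : ℝ) ^ Nat.log 2 n ≤ x := by
        calc (2 : ℝ) ^ Nat.log 2 n = ((2 ^ Nat.log 2 n : ℕ) : ℝ) := by push_cast; ring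
          _ ≤ (n : ℝ) := by exact_mod_cast hge
          _ ≤ x := Nat.floor_le (le_of_lt hx0)
      have hsum : ∑ k ∈ Finset.range (n + 1), ‖fourierCoeffMeasure μ k‖ ^ 2
          ≤ ∑ k ∈ Finset.range (2 ^ N + 1), ‖fourierCoeffMeasure μ k‖ ^ 2 := by
        refine Finset.sum_le_sum_of_subset_of_nonneg (Finset.range_subset_range.2 (by omega)) ?_
        intros
        positivity
      have hsum2 : ∑ k ∈ Finset.range (2 ^ N + 1), ‖fourierCoeffMeasure μ k‖ ^ 2
          = 2 ^ N * wienerSum μ N := by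
        unfold wienerSum
        rw [← mul_assoc, mul_inv_cancel₀ (by positivity), one_mul]
      have hwnn : 0 ≤ wienerSum μ N := by unfold wienerSum; positivity
      calc x⁻¹ * ∑ k ∈ Finset.range (n + 1), ‖fourierCoeffMeasure μ k‖ ^ 2
          ≤ x⁻¹ * ((2:ℝ) ^ N * wienerSum μ N) := by
            refine mul_le_mul_of_nonneg_left ?_ (by positivity)
            rw [← hsum2]
            exact hsum
        _ ≤ ((2 : ℝ) ^ Nat.log 2 n)⁻¹ * ((2:ℝ) ^ N * wienerSum μ N) := by
            refine mul_le_mul_of_nonneg_right ?_ (by positivity)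
            exact inv_anti₀ (by positivity) hxge
        _ = 2 * wienerSum μ N := by
            rw [hN, pow_succ]
            field_simp
        _ ≤ 2 * B N := by
            have := hws N
            simp only [hB]
            nlinarith
    have hupper : Tendsto (fun x : ℝ => 2 * B (Nat.log 2 ⌊x⌋₊ + 1)) atTop (𝓝 0) := by
      have := (hB0.comp hlog).const_mul (2 : ℝ)
      simpa using this
    refine squeeze_zero' ?_ ?_ hupper
    · filter_upwards [eventually_ge_atTop (1 : ℝ)] with x hx
      have hx0 : (0 : ℝ) < x := lt_of_lt_of_le one_pos hx
      positivity
    · filter_upwards [eventually_ge_atTop (1 : ℝ)] with x hx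
      exact hmain x hx
  · intro N hN
    obtain ⟨M, rfl⟩ : ∃ M, N = M + 1 := ⟨N - 1, by omega⟩
    have h0 : 0 ≤ wienerSum μ (M + 1) := by unfold wienerSum; positivity
    refine ⟨h0, ?_⟩
    have hle := hws (M + 1)
    have hnum := numeric_bound (M + 1)
    have hmax := max_ge_one hμ
    have hpow : (8 / 7 : ℝ) * (7 / 8) ^ (M + 1) = (7 / 8) ^ M := by
      rw [pow_succ]
      ring
    have hM : (M + 1) - 1 = M := by omega
    rw [hM]
    calc wienerSum μ (M + 1) < (7 / 8 : ℝ) ^ M := by rw [← hpow]; linarith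
      _ ≤ (7 / 8 : ℝ) ^ M * max (wienerSum μ 0) (wienerSum μ 1) := by
          nlinarith [pow_pos (show (0:ℝ) < 7 / 8 by norm_num) M]
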